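/- For every φ in X_∞ = closure of the Bruhat–Schwartz space D(ℚ_p^n) in the sup norm, the piecewise-constant interpolations P_N φ(x) = Σ_{i ∈ G_N^n} φ(i)·Ω(p^N‖x−i‖_p) converge uniformly to φ as N → ∞. -/

import Mathlib

open scoped ZeroAtInfty

lemma padic_pi_norm_add_le_max {p : ℕ} [Fact p.Prime] {n : ℕ} (a b : Fin n → ℚ_[p]) :
    ‖a + b‖ ≤ max ‖a‖ ‖b‖ := by
  rw [pi_norm_le_iff_of_nonneg (le_max_of_le_left (norm_nonneg a))]
  intro i
  calc ‖(a + b) i‖ = ‖a i + b i‖ := rfl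
    _ ≤ max ‖a i‖ ‖b i‖ := Padic.nonarchimedean _ _
    _ ≤ max ‖a‖ ‖b‖ := max_le_max (norm_le_pi_norm a i) (norm_le_pi_norm b i)

/-- For every `φ` in `X_∞ = C₀(ℚ_p^n, ℝ)` (the sup-norm closure of the Bruhat–Schwartz
space), the piecewise-constant interpolations `P_N φ = Σ_{i ∈ G_N} φ(i)·Ω(p^N‖x-i‖_p)`
converge uniformly to `φ` as `N → ∞`. -/
theorem stmt6 (p : ℕ) [Fact p.Prime] (n : ℕ)
    (G : ℕ → Finset (Fin n → ℚ_[p]))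
    (hGmem : ∀ N : ℕ, ∀ i ∈ G N, ‖i‖ ≤ (p : ℝ) ^ (N : ℤ))
    (hGsep : ∀ N : ℕ, ∀ i ∈ G N, ∀ j ∈ G N, i ≠ j → (p : ℝ) ^ (-(N : ℤ)) < ‖i - j‖)
    (hGcov : ∀ N : ℕ, ∀ x : Fin n → ℚ_[p], ‖x‖ ≤ (p : ℝ) ^ (N : ℤ) →
      ∃ i ∈ G N, ‖x - i‖ ≤ (p : ℝ) ^ (-(N : ℤ)))
    (φ : C₀(Fin n → ℚ_[p], ℝ)) :
    Filter.Tendsto (fun N : ℕ =>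
        ⨆ x : Fin n → ℚ_[p],
          |φ x - ∑ i ∈ G N, φ i * (if ‖x - i‖ ≤ (p : ℝ) ^ (-(N : ℤ)) then (1 : ℝ) else 0)|)
      Filter.atTop (nhds 0) := by
  have hp1 : (1 : ℝ) < (p : ℝ) := by
    exact_mod_cast (Fact.out : p.Prime).one_lt
  have hp0 : (0 : ℝ) < (p : ℝ) := lt_trans one_pos hp1
  rw [Metric.tendsto_atTop]
  intro ε hε
  -- uniform continuity
  obtain ⟨δ, hδ, hδ'⟩ := Metric.uniformContinuous_iff.mp
    (ZeroAtInftyContinuousMap.uniformContinuous φ) (ε/2) (half_pos hε)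
  -- vanishing at infinity
  have h0 : {x : Fin n → ℚ_[p] | φ x ∈ Metric.ball (0:ℝ) (ε/2)} ∈ Filter.cocompact _ :=
    ZeroAtInftyContinuousMap.zero_at_infty' φ (Metric.ball_mem_nhds 0 (half_pos hε))
  obtain ⟨K, hK, hKsub⟩ := Filter.mem_cocompact.mp h0
  obtain ⟨R, hR⟩ := (Metric.isBounded_iff_subset_closedBall 0).mp hK.isBounded
  obtain ⟨N1, hN1⟩ := pow_unbounded_of_one_lt R hp1
  obtain ⟨N2, hN2⟩ := pow_unbounded_of_one_lt δ⁻¹ hp1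
  refine ⟨max N1 N2, fun N hN => ?_⟩
  have hN1' : N1 ≤ N := le_trans (le_max_left _ _) hN
  have hN2' : N2 ≤ N := le_trans (le_max_right _ _) hN
  have hRN : R < (p : ℝ) ^ (N : ℤ) := by
    calc R < (p:ℝ) ^ N1 := hN1
      _ ≤ (p:ℝ) ^ N := pow_le_pow_right₀ hp1.le hN1'
      _ = (p:ℝ) ^ (N : ℤ) := (zpow_natCast _ _).symm
  have hδN : (p : ℝ) ^ (-(N : ℤ)) < δ := by
    rw [zpow_neg, zpow_natCast]
    rw [inv_lt_comm₀ (pow_pos hp0 N) hδ]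
    calc δ⁻¹ < (p:ℝ) ^ N2 := hN2
      _ ≤ (p:ℝ) ^ N := pow_le_pow_right₀ hp1.le hN2'
  -- pointwise bound
  have key : ∀ x : Fin n → ℚ_[p],
      |φ x - ∑ i ∈ G N, φ i * (if ‖x - i‖ ≤ (p : ℝ) ^ (-(N : ℤ)) then (1 : ℝ) else 0)| ≤ ε/2 := by
    intro x
    by_cases hx : ‖x‖ ≤ (p : ℝ) ^ (N : ℤ)
    · obtain ⟨i, hi, hxi⟩ := hGcov N x hx
      have hsum : (∑ j ∈ G N, φ j * (if ‖x - j‖ ≤ (p : ℝ) ^ (-(N : ℤ)) then (1 : ℝ) else 0))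
          = φ i := by
        rw [Finset.sum_eq_single_of_mem i hi]
        · rw [if_pos hxi, mul_one]
        · intro j hj hji
          rw [if_neg, mul_zero]
          intro hxj
          have : ‖i - j‖ ≤ (p : ℝ) ^ (-(N : ℤ)) := by
            have : i - j = (i - x) + (x - j) := by ring
            rw [this]
            refine le_trans (padic_pi_norm_add_le_max _ _) (max_le ?_ hxj)
            rwa [norm_sub_rev]
          exact absurd this (not_le.mpr (hGsep N i hi j hj (Ne.symm hji)))
      rw [hsum]
      have : dist x i < δ := by
        rw [dist_eq_norm]
        exact lt_of_le_of_lt hxi hδN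
      exact le_of_lt (by simpa [Real.dist_eq] using hδ' this)
    · have hsum : (∑ j ∈ G N, φ j * (if ‖x - j‖ ≤ (p : ℝ) ^ (-(N : ℤ)) then (1 : ℝ) else 0))
          = 0 := by
        apply Finset.sum_eq_zero
        intro j hj
        rw [if_neg, mul_zero]
        intro hxj
        apply hx
        have : x = (x - j) + j := by ring
        rw [this]
        refine le_trans (padic_pi_norm_add_le_max _ _) (max_le ?_ (hGmem N j hj))
        refine le_trans hxj ?_
        exact zpow_le_zpow_right₀ hp1.le (by omega)
      rw [hsum, sub_zero]
      have hxK : x ∉ K := by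
        intro hxK
        have := hR hxK
        rw [Metric.mem_closedBall, dist_zero_right] at this
        exact hx (le_trans this hRN.le)
      have := hKsub hxK
      rw [Set.mem_setOf_eq, Metric.mem_ball, Real.dist_eq, sub_zero] at this
      exact le_of_lt this
  have hnonneg : (0:ℝ) ≤ ⨆ x : Fin n → ℚ_[p],
      |φ x - ∑ i ∈ G N, φ i * (if ‖x - i‖ ≤ (p : ℝ) ^ (-(N : ℤ)) then (1 : ℝ) else 0)| :=
    Real.iSup_nonneg fun x => abs_nonneg _
  have hle := Real.iSup_le key (by positivity)
  rw [Real.dist_eq, sub_zero, abs_of_nonneg hnonneg]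
  exact lt_of_le_of_lt hle (half_lt_self hε)
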